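/- arXiv:1105.4812 — 3 statements merged into one kernel-verified Lean document; each statement's English description precedes it below -/
import Mathlib

section
/- Let A and B be n×n matrices with natural number entries such that every row of A sums to r₁ and every row of B sums to r₂, with at least one zero diagonal entry in A and in B, such that the greatest common divisor of the entries of A is 1 and the greatest common divisor of the entries of B is 1. Suppose that for every pair of reals (a₁, b₁) there exist reals (a₂, b₂) with a₁·Id + b₁·A = a₂·Id + b₂·B, and conversely for every (a₂, b₂) there exist (a₁, b₁) with the same identity. Then A = B. -/
/-- A matrix with constant row sums, a zero diagonal entry, and gcd of entries 1
has a nonzero off-diagonal entry. -/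
lemma exists_offdiag_ne_zero (n r : ℕ) (A : Matrix (Fin n) (Fin n) ℕ)
    (hA : ∀ i, ∑ j, A i j = r) (hd : ∃ i, A i i = 0)
    (hg : (Finset.univ : Finset (Fin n × Fin n)).gcd (fun p => A p.1 p.2) = 1) :
    ∃ i j, i ≠ j ∧ A i j ≠ 0 := by
  by_contra h
  push_neg at h
  obtain ⟨i0, hi0⟩ := hd
  have hzero : ∀ i j, A i j = 0 := by
    have hr : r = 0 := by
      have := hA i0
      rw [Finset.sum_eq_single i0 (fun j _ hj => h i0 j (Ne.symm hj)) (by simp)] at this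
      omega
    intro i j
    have h1 := hA i
    rw [hr] at h1
    have := Finset.sum_eq_zero_iff.mp h1 j (Finset.mem_univ j)
    exact this
  rw [Finset.gcd_eq_zero_iff.mpr (fun p _ => hzero p.1 p.2)] at hg
  exact one_ne_zero hg.symm

/-- Two reduced homogeneous networks that are linearly equivalent are equal. -/
theorem reduced_linear_equiv_eq (n r₁ r₂ : ℕ) (hn : 1 ≤ n)
    (A B : Matrix (Fin n) (Fin n) ℕ)
    (hA : ∀ i, ∑ j, A i j = r₁) (hB : ∀ i, ∑ j, B i j = r₂)
    (hAdiag : ∃ i, A i i = 0) (hBdiag : ∃ i, B i i = 0)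
    (hAgcd : (Finset.univ : Finset (Fin n × Fin n)).gcd (fun p => A p.1 p.2) = 1)
    (hBgcd : (Finset.univ : Finset (Fin n × Fin n)).gcd (fun p => B p.1 p.2) = 1)
    (h₁ : ∀ a₁ b₁ : ℝ, ∃ a₂ b₂ : ℝ,
      a₁ • (1 : Matrix (Fin n) (Fin n) ℝ) + b₁ • A.map (Nat.cast : ℕ → ℝ)
        = a₂ • 1 + b₂ • B.map (Nat.cast : ℕ → ℝ))
    (h₂ : ∀ a₂ b₂ : ℝ, ∃ a₁ b₁ : ℝ,
      a₁ • (1 : Matrix (Fin n) (Fin n) ℝ) + b₁ • A.map (Nat.cast : ℕ → ℝ)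
        = a₂ • 1 + b₂ • B.map (Nat.cast : ℕ → ℝ)) :
    A = B := by
  -- extract the two linear relations
  obtain ⟨α, β, hαβ⟩ := h₁ 0 1
  obtain ⟨γ, δ, hγδ⟩ := h₂ 0 1
  -- entrywise versions
  have eAB : ∀ i j : Fin n, (A i j : ℝ) = α * (if i = j then 1 else 0) + β * (B i j : ℝ) := by
    intro i j
    have := congrFun (congrFun hαβ i) j
    simpa [Matrix.add_apply, Matrix.smul_apply, Matrix.one_apply, Matrix.map_apply,
      smul_eq_mul, mul_ite] using this
  have eBA : ∀ i j : Fin n, (B i j : ℝ) = γ * (if i = j then 1 else 0) + δ * (A i j : ℝ) := by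
    intro i j
    have := (congrFun (congrFun hγδ i) j).symm
    simpa [Matrix.add_apply, Matrix.smul_apply, Matrix.one_apply, Matrix.map_apply,
      smul_eq_mul, mul_ite] using this
  obtain ⟨iA, hiA⟩ := hAdiag
  obtain ⟨iB, hiB⟩ := hBdiag
  obtain ⟨i0, j0, hij0, hA0⟩ := exists_offdiag_ne_zero n r₁ A hA ⟨iA, hiA⟩ hAgcd
  obtain ⟨i1, j1, hij1, hB1⟩ := exists_offdiag_ne_zero n r₂ B hB ⟨iB, hiB⟩ hBgcd
  -- β > 0 and B i0 j0 ≠ 0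
  have e0 : (A i0 j0 : ℝ) = β * (B i0 j0 : ℝ) := by
    have := eAB i0 j0; simpa [hij0] using this
  have e1 : (B i1 j1 : ℝ) = δ * (A i1 j1 : ℝ) := by
    have := eBA i1 j1; simpa [hij1] using this
  have hA0' : (0 : ℝ) < (A i0 j0 : ℝ) := by positivity
  have hB1' : (0 : ℝ) < (B i1 j1 : ℝ) := by positivity
  have hBc : (0:ℝ) ≤ (B i0 j0 : ℝ) := Nat.cast_nonneg _
  have hAc : (0:ℝ) ≤ (A i1 j1 : ℝ) := Nat.cast_nonneg _
  have hβpos : 0 < β := by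
    rcases lt_trichotomy β 0 with h | h | h
    · nlinarith
    · exact absurd (by simpa [h] using e0) hA0'.ne'
    · exact h
  have hδpos : 0 < δ := by
    rcases lt_trichotomy δ 0 with h | h | h
    · nlinarith
    · exact absurd (by simpa [h] using e1) hB1'.ne'
    · exact h
  -- diagonal relations
  have hα : α = (A iB iB : ℝ) := by
    have := eAB iB iB; simp [hiB] at this; linarith
  have hγ : γ = (B iA iA : ℝ) := by
    have := eBA iA iA; simp [hiA] at this; linarith
  -- composition at diagonal iA: 0 = α + β γ
  have hcomp : α + β * γ = 0 := by
    have h1 := eAB iA iA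
    have h2 := eBA iA iA
    simp [hiA] at h1 h2
    rw [h2] at h1
    linarith
  have hα0 : α = 0 := by
    have h1 : 0 ≤ α := by rw [hα]; positivity
    have h2 : 0 ≤ γ := by rw [hγ]; positivity
    nlinarith
  have hγ0 : γ = 0 := by
    have h2 : 0 ≤ γ := by rw [hγ]; positivity
    nlinarith
  -- now A = β • B entrywise
  have key : ∀ i j, (A i j : ℝ) = β * (B i j : ℝ) := by
    intro i j
    have := eAB i j
    rw [hα0] at this
    simpa using this
  -- get natural number relation q * A = p * B with p = A i0 j0, q = B i0 j0
  set p := A i0 j0 with hp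
  set q := B i0 j0 with hq
  have hq0 : q ≠ 0 := by
    intro h
    rw [h] at e0
    simp at e0
    exact hA0 e0
  have hqR : (q : ℝ) ≠ 0 := Nat.cast_ne_zero.mpr hq0
  have hβ : β = (p : ℝ) / (q : ℝ) := by
    field_simp
    linarith [e0]
  have hnat : ∀ i j, q * A i j = p * B i j := by
    intro i j
    have : ((q * A i j : ℕ) : ℝ) = ((p * B i j : ℕ) : ℝ) := by
      push_cast
      rw [key i j, hβ]
      field_simp
    exact_mod_cast this
  -- gcd argument: q = p
  have hpq : p = q := by
    have h1 : (Finset.univ : Finset (Fin n × Fin n)).gcd (fun x => q * A x.1 x.2) = q := by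
      rw [Finset.gcd_mul_left, hAgcd]; simp
    have h2 : (Finset.univ : Finset (Fin n × Fin n)).gcd (fun x => p * B x.1 x.2) = p := by
      rw [Finset.gcd_mul_left, hBgcd]; simp
    rw [← h1, ← h2]
    congr 1
    ext x
    exact (hnat x.1 x.2).symm
  ext i j
  have := hnat i j
  rw [hpq] at this
  exact (Nat.eq_of_mul_eq_mul_left (Nat.pos_of_ne_zero hq0) this)
end

section
/- Minimal connected 2-cell homogeneous networks of degree r ≥ 2 are in bijection with integers k with 1 ≤ k ≤ r and gcd(r,k) = 1: each such network has adjacency matrix with entries E 1 1 = r−k, E 1 2 = k, E 2 1 = r, E 2 2 = 0 (up to swapping vertices). Consequently the number of such networks up to isomorphism is φ(r). -/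
/-- Minimal connected 2-cell degree-r networks (normalized so that vertex 2 has no
loops) correspond bijectively to k with 1 ≤ k ≤ r and gcd(r,k) = 1, via
E = ![![r-k, k], ![r, 0]]; hence there are φ(r) of them up to isomorphism. -/
theorem two_cell_minimal_classification (r : ℕ) (hr : 2 ≤ r) :
    {E : Matrix (Fin 2) (Fin 2) ℕ |
        (∀ i, ∑ j, E i j = r) ∧ (∃ i, E i i = 0) ∧
        (Finset.univ : Finset (Fin 2 × Fin 2)).gcd (fun p => E p.1 p.2) = 1 ∧
        0 < E 0 1 ∧ 0 < E 1 0 ∧ E 1 1 = 0}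
      = (fun k : ℕ => (![![r - k, k], ![r, 0]] : Matrix (Fin 2) (Fin 2) ℕ)) ''
          {k : ℕ | 1 ≤ k ∧ k ≤ r ∧ Nat.gcd r k = 1} ∧
    Set.InjOn (fun k : ℕ => (![![r - k, k], ![r, 0]] : Matrix (Fin 2) (Fin 2) ℕ))
      {k : ℕ | 1 ≤ k ∧ k ≤ r ∧ Nat.gcd r k = 1} ∧
    {E : Matrix (Fin 2) (Fin 2) ℕ |
        (∀ i, ∑ j, E i j = r) ∧ (∃ i, E i i = 0) ∧
        (Finset.univ : Finset (Fin 2 × Fin 2)).gcd (fun p => E p.1 p.2) = 1 ∧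
        0 < E 0 1 ∧ 0 < E 1 0 ∧ E 1 1 = 0}.ncard = Nat.totient r := by
  have hset : {E : Matrix (Fin 2) (Fin 2) ℕ |
        (∀ i, ∑ j, E i j = r) ∧ (∃ i, E i i = 0) ∧
        (Finset.univ : Finset (Fin 2 × Fin 2)).gcd (fun p => E p.1 p.2) = 1 ∧
        0 < E 0 1 ∧ 0 < E 1 0 ∧ E 1 1 = 0}
      = (fun k : ℕ => (![![r - k, k], ![r, 0]] : Matrix (Fin 2) (Fin 2) ℕ)) ''
          {k : ℕ | 1 ≤ k ∧ k ≤ r ∧ Nat.gcd r k = 1} := by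
    ext E
    constructor
    · rintro ⟨hsum, -, hgcd, h01, h10, h11⟩
      have hs0 := hsum 0
      have hs1 := hsum 1
      rw [Fin.sum_univ_two] at hs0 hs1
      rw [h11, add_zero] at hs1
      refine ⟨E 0 1, ⟨h01, ?_, ?_⟩, ?_⟩
      · omega
      · -- gcd r (E 0 1) = 1
        have hd : Nat.gcd r (E 0 1) ∣ (Finset.univ : Finset (Fin 2 × Fin 2)).gcd
            (fun p => E p.1 p.2) := by
          apply Finset.dvd_gcd
          intro p _
          fin_cases p
          · show Nat.gcd r (E 0 1) ∣ E 0 0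
            have h00 : E 0 0 = r - E 0 1 := by omega
            rw [h00]
            exact Nat.dvd_sub (Nat.gcd_dvd_left _ _) (Nat.gcd_dvd_right _ _)
          · exact Nat.gcd_dvd_right _ _
          · show Nat.gcd r (E 0 1) ∣ E 1 0
            rw [hs1]; exact Nat.gcd_dvd_left _ _
          · show Nat.gcd r (E 0 1) ∣ E 1 1
            rw [h11]; exact dvd_zero _
        rw [hgcd] at hd
        exact Nat.dvd_one.mp hd
      · ext i j
        fin_cases i <;> fin_cases j <;> simp [Matrix.cons_val_zero, Matrix.cons_val_one]
        · omega
        · exact hs1.symm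
        · exact h11.symm
    · rintro ⟨k, ⟨hk1, hkr, hg⟩, rfl⟩
      refine ⟨?_, ⟨1, by simp⟩, ?_, by simp; omega, by simpa using (by omega : 0 < r), by simp⟩
      · intro i
        fin_cases i <;> simp [Fin.sum_univ_two] <;> omega
      · have h1 : (Finset.univ : Finset (Fin 2 × Fin 2)).gcd
            (fun p => (![![r - k, k], ![r, 0]] : Matrix (Fin 2) (Fin 2) ℕ) p.1 p.2) ∣ r :=
          Finset.gcd_dvd (Finset.mem_univ ((1 : Fin 2), (0 : Fin 2)))
        have h2 : (Finset.univ : Finset (Fin 2 × Fin 2)).gcd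
            (fun p => (![![r - k, k], ![r, 0]] : Matrix (Fin 2) (Fin 2) ℕ) p.1 p.2) ∣ k :=
          Finset.gcd_dvd (Finset.mem_univ ((0 : Fin 2), (1 : Fin 2)))
        have := Nat.dvd_gcd h1 h2
        rw [hg] at this
        exact Nat.dvd_one.mp this
  refine ⟨hset, ?_, ?_⟩
  · intro a ha b hb hab
    have := congrFun (congrFun hab 0) 1
    simpa using this
  · rw [hset]; erw [Set.ncard_image_of_injOn]
    · have : {k : ℕ | 1 ≤ k ∧ k ≤ r ∧ Nat.gcd r k = 1}
          = ↑((Finset.range r).filter (Nat.Coprime r)) := by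
        ext k
        simp only [Set.mem_setOf_eq, Finset.coe_filter, Finset.mem_range, Set.mem_setOf_eq]
        constructor
        · rintro ⟨h1, h2, h3⟩
          refine ⟨?_, h3⟩
          rcases Nat.lt_or_ge k r with h | h
          · exact h
          · have : k = r := le_antisymm h2 h
            subst this
            simp [Nat.gcd_self] at h3
            omega
        · rintro ⟨h1, h2⟩
          refine ⟨?_, le_of_lt h1, h2⟩
          rcases Nat.eq_zero_or_pos k with rfl | h
          · simp [Nat.gcd_zero_right] at h2; omega
          · exact h
      rw [this, Set.ncard_coe_finset]
      rfl
    · intro a ha b hb hab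
      have := congrFun (congrFun hab 0) 1
      simpa using this
end

section
/- The size of the conjugacy class in the symmetric group Sₙ corresponding to the cycle type given by a partition with αᵢ parts of size i (so that Σ i·αᵢ = n) is n! / (1^{α₁} · 2^{α₂} · … · n^{αₙ} · α₁! · α₂! · … · αₙ!). -/
namespace ConjCount

open Equiv Equiv.Perm Finset Subgroup
open scoped Classical

variable {β : Type*} [Fintype β] [DecidableEq β]

variable (σ : Perm β)

abbrev CF := {c : Perm β // c ∈ σ.cycleFactorsFinset}

variable {σ}

lemma CF.isCycle (c : CF σ) : c.1.IsCycle :=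
  (mem_cycleFactorsFinset_iff.mp c.2).1

lemma CF.apply_eq (c : CF σ) {x : β} (hx : x ∈ c.1.support) : σ x = c.1 x :=
  ((mem_cycleFactorsFinset_iff.mp c.2).2 x hx).symm

lemma CF.support_nonempty (c : CF σ) : c.1.support.Nonempty :=
  Finset.nonempty_iff_ne_empty.2 fun h => (CF.isCycle c).ne_one (support_eq_empty_iff.mp h)

/-- base point of a cycle -/
noncomputable def pt (c : CF σ) : β := (CF.support_nonempty c).choose

lemma pt_mem (c : CF σ) : pt c ∈ c.1.support := (CF.support_nonempty c).choose_spec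

lemma CF.eq_of_mem_support {c d : CF σ} {x : β} (hc : x ∈ c.1.support)
    (hd : x ∈ d.1.support) : c = d :=
  Subtype.ext ((cycle_is_cycleOf hc c.2).trans (cycle_is_cycleOf hd d.2).symm)

lemma CF.mem_cf {x : β} (hx : σ x ≠ x) : σ.cycleOf x ∈ σ.cycleFactorsFinset :=
  cycleOf_mem_cycleFactorsFinset_iff.mpr (mem_support.mpr hx)

lemma CF.self_mem_support {x : β} (hx : σ x ≠ x) :
    x ∈ (σ.cycleOf x).support :=
  mem_support_cycleOf_iff.mpr ⟨SameCycle.refl σ x, mem_support.mpr hx⟩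

/-- powers of a cycle agreeing at a support point are transportable -/
lemma pow_eq_pow_aux {c d : Perm β} (hc : c.IsCycle) (hd : d.IsCycle)
    (hcard : d.support.card = c.support.card) {x : β} (hx : x ∈ c.support)
    {m j : ℕ} (hmj : j ≤ m) (h : (c ^ m) x = (c ^ j) x) : d ^ m = d ^ j := by
  have hm : m = (m - j) + j := by omega
  have h1 : (c ^ (m - j)) ((c ^ j) x) = (c ^ j) x := by
    rw [← Equiv.Perm.mul_apply, ← pow_add, ← hm, h]
  have h2 : (c ^ j) x ∈ c.support := pow_apply_mem_support.mpr hx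
  have h3 : c ^ (m - j) = 1 := (hc.pow_eq_one_iff' (mem_support.mp h2)).mpr h1
  have h4 : orderOf c ∣ m - j := orderOf_dvd_of_pow_eq_one h3
  have h5 : orderOf d ∣ m - j := by rwa [hd.orderOf, hcard, ← hc.orderOf]
  have h6 : d ^ (m - j) = 1 := orderOf_dvd_iff_pow_eq_one.mp h5
  rw [hm, pow_add, h6, one_mul]

lemma pow_eq_pow {c d : Perm β} (hc : c.IsCycle) (hd : d.IsCycle)
    (hcard : d.support.card = c.support.card) {x : β} (hx : x ∈ c.support)
    {m j : ℕ} (h : (c ^ m) x = (c ^ j) x) : d ^ m = d ^ j := by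
  rcases le_total j m with h' | h'
  · exact pow_eq_pow_aux hc hd hcard hx h' h
  · exact (pow_eq_pow_aux hc hd hcard hx h' h.symm).symm

lemma zpowers_eq_one_of_fix {c w : Perm β} (hc : c.IsCycle) (hw : w ∈ zpowers c)
    {x : β} (hx : x ∈ c.support) (h : w x = x) : w = 1 := by
  obtain ⟨n, rfl⟩ : ∃ n : ℕ, c ^ n = w := by
    rwa [← Submonoid.mem_powers_iff, mem_powers_iff_mem_zpowers]
  exact (hc.pow_eq_one_iff' (mem_support.mp hx)).mpr h

lemma zpowers_eq_of_apply_eq {c w w' : Perm β} (hc : c.IsCycle) (hw : w ∈ zpowers c)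
    (hw' : w' ∈ zpowers c) {x : β} (hx : x ∈ c.support) (h : w x = w' x) : w = w' := by
  have h1 : (w'⁻¹ * w) x = x := by
    rw [Equiv.Perm.mul_apply, h, Perm.coe_inv, Equiv.symm_apply_apply]
  have := zpowers_eq_one_of_fix hc (mul_mem (inv_mem hw') hw) hx h1
  rw [mul_eq_one_iff_eq_inv] at this
  exact (inv_injective this).symm

lemma zpowers_apply_mem_support {c w : Perm β} (hw : w ∈ zpowers c)
    {x : β} (hx : x ∈ c.support) : w x ∈ c.support := by
  obtain ⟨n, rfl⟩ : ∃ n : ℕ, c ^ n = w := by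
    rwa [← Submonoid.mem_powers_iff, mem_powers_iff_mem_zpowers]
  exact pow_apply_mem_support.mpr hx


variable (σ) in
/-- The data determining a permutation commuting with `σ`. -/
def Dat :=
  Perm {x : β // σ x = x} ×
    {π : Perm (CF σ) // ∀ c, (π c).1.support.card = c.1.support.card} ×
    ((c : CF σ) → zpowers c.1)

/-- marked point of a cycle, twisted by the rotation data -/
noncomputable def bpt (r : (c : CF σ) → zpowers c.1) (c : CF σ) : β :=
  (r c : Perm β) (pt c)

lemma bpt_mem (r : (c : CF σ) → zpowers c.1) (c : CF σ) : bpt r c ∈ c.1.support :=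
  zpowers_apply_mem_support (r c).2 (pt_mem c)

/-- discrete logarithm along a cycle -/
noncomputable def idx (c : CF σ) (y x : β) : ℕ :=
  if h : ∃ m : ℕ, (c.1 ^ m) y = x then h.choose else 0

lemma idx_spec {c : CF σ} {y x : β} (hy : y ∈ c.1.support) (hx : x ∈ c.1.support) :
    (c.1 ^ idx c y x) y = x := by
  have h : ∃ m : ℕ, (c.1 ^ m) y = x :=
    (CF.isCycle c).exists_pow_eq (mem_support.mp hy) (mem_support.mp hx)
  rw [idx, dif_pos h]; exact h.choose_spec

noncomputable def psiFun (d : Dat σ) : β → β := fun x =>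
  if hx : σ.cycleOf x ∈ σ.cycleFactorsFinset then
    ((d.2.1.1 ⟨σ.cycleOf x, hx⟩).1 ^ idx ⟨σ.cycleOf x, hx⟩ (pt ⟨σ.cycleOf x, hx⟩) x)
      (bpt d.2.2 (d.2.1.1 ⟨σ.cycleOf x, hx⟩))
  else ofSubtype d.1 x

noncomputable def psiInv (d : Dat σ) : β → β := fun y =>
  if hy : σ.cycleOf y ∈ σ.cycleFactorsFinset then
    ((d.2.1.1⁻¹ ⟨σ.cycleOf y, hy⟩).1 ^ idx ⟨σ.cycleOf y, hy⟩ (bpt d.2.2 ⟨σ.cycleOf y, hy⟩) y)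
      (pt (d.2.1.1⁻¹ ⟨σ.cycleOf y, hy⟩))
  else ofSubtype d.1⁻¹ y

lemma not_mem_cf {x : β} (hx : σ x = x) : ¬ σ.cycleOf x ∈ σ.cycleFactorsFinset := by
  rw [cycleOf_mem_cycleFactorsFinset_iff, mem_support]
  exact fun h => h hx

lemma psiFun_fix (d : Dat σ) {x : β} (hx : σ x = x) : psiFun d x = ofSubtype d.1 x := by
  rw [psiFun, dif_neg (not_mem_cf hx)]

lemma psiInv_fix (d : Dat σ) {x : β} (hx : σ x = x) : psiInv d x = ofSubtype d.1⁻¹ x := by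
  rw [psiInv, dif_neg (not_mem_cf hx)]

lemma ofSubtype_fix (ρ : Perm {x : β // σ x = x}) {x : β} (hx : σ x = x) :
    σ (ofSubtype ρ x) = ofSubtype ρ x := by
  rw [ofSubtype_apply_of_mem ρ hx]
  exact (ρ ⟨x, hx⟩).2

lemma psiFun_pow (d : Dat σ) (c : CF σ) (m : ℕ) :
    psiFun d ((c.1 ^ m) (pt c)) = ((d.2.1.1 c).1 ^ m) (bpt d.2.2 (d.2.1.1 c)) := by
  have hx : (c.1 ^ m) (pt c) ∈ c.1.support := pow_apply_mem_support.mpr (pt_mem c)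
  have hC : σ.cycleOf ((c.1 ^ m) (pt c)) = c.1 := (cycle_is_cycleOf hx c.2).symm
  have hmem : σ.cycleOf ((c.1 ^ m) (pt c)) ∈ σ.cycleFactorsFinset := by
    rw [hC]; exact c.2
  rw [psiFun]
  rw [dif_pos hmem]
  have hcc : (⟨σ.cycleOf ((c.1 ^ m) (pt c)), hmem⟩ : CF σ) = c := Subtype.ext hC
  rw [hcc]
  have hspec : (c.1 ^ idx c (pt c) ((c.1 ^ m) (pt c))) (pt c) = (c.1 ^ m) (pt c) :=
    idx_spec (pt_mem c) hx
  rw [pow_eq_pow (CF.isCycle c) (CF.isCycle (d.2.1.1 c)) (d.2.1.2 c) (pt_mem c) hspec]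

lemma psiInv_pow (d : Dat σ) (c : CF σ) (m : ℕ) :
    psiInv d ((c.1 ^ m) (bpt d.2.2 c)) = ((d.2.1.1⁻¹ c).1 ^ m) (pt (d.2.1.1⁻¹ c)) := by
  have hb := bpt_mem d.2.2 c
  have hx : (c.1 ^ m) (bpt d.2.2 c) ∈ c.1.support := pow_apply_mem_support.mpr hb
  have hC : σ.cycleOf ((c.1 ^ m) (bpt d.2.2 c)) = c.1 := (cycle_is_cycleOf hx c.2).symm
  have hmem : σ.cycleOf ((c.1 ^ m) (bpt d.2.2 c)) ∈ σ.cycleFactorsFinset := by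
    rw [hC]; exact c.2
  rw [psiInv, dif_pos hmem]
  have hcc : (⟨σ.cycleOf ((c.1 ^ m) (bpt d.2.2 c)), hmem⟩ : CF σ) = c := Subtype.ext hC
  rw [hcc]
  have hspec : (c.1 ^ idx c (bpt d.2.2 c) ((c.1 ^ m) (bpt d.2.2 c))) (bpt d.2.2 c)
      = (c.1 ^ m) (bpt d.2.2 c) := idx_spec hb hx
  have hcard : (d.2.1.1⁻¹ c).1.support.card = c.1.support.card := by
    have := d.2.1.2 (d.2.1.1⁻¹ c)
    rw [Perm.coe_inv, Equiv.apply_symm_apply] at this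
    exact this.symm
  rw [pow_eq_pow (CF.isCycle c) (CF.isCycle (d.2.1.1⁻¹ c)) hcard hb hspec]

lemma psi_left_inv (d : Dat σ) : Function.LeftInverse (psiInv d) (psiFun d) := by
  intro x
  by_cases hx : σ x = x
  · rw [psiFun_fix d hx, psiInv_fix d (ofSubtype_fix d.1 hx)]
    rw [map_inv, Perm.coe_inv, Equiv.symm_apply_apply]
  · set c : CF σ := ⟨σ.cycleOf x, CF.mem_cf hx⟩ with hc
    have hxc : x ∈ c.1.support := CF.self_mem_support hx
    have hrw : (c.1 ^ idx c (pt c) x) (pt c) = x := idx_spec (pt_mem c) hxc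
    have h1 := psiFun_pow d c (idx c (pt c) x)
    rw [hrw] at h1
    rw [h1, psiInv_pow, Perm.coe_inv, Equiv.symm_apply_apply]
    exact hrw

lemma psi_right_inv (d : Dat σ) : Function.RightInverse (psiInv d) (psiFun d) := by
  intro y
  by_cases hy : σ y = y
  · rw [psiInv_fix d hy, psiFun_fix d (ofSubtype_fix d.1⁻¹ hy)]
    rw [map_inv, Perm.coe_inv, Equiv.apply_symm_apply]
  · set c : CF σ := ⟨σ.cycleOf y, CF.mem_cf hy⟩ with hc
    have hyc : y ∈ c.1.support := CF.self_mem_support hy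
    have hrw : (c.1 ^ idx c (bpt d.2.2 c) y) (bpt d.2.2 c) = y :=
      idx_spec (bpt_mem d.2.2 c) hyc
    have h1 := psiInv_pow d c (idx c (bpt d.2.2 c) y)
    rw [hrw] at h1
    rw [h1, psiFun_pow, Perm.coe_inv, Equiv.apply_symm_apply]
    exact hrw

noncomputable def psi (d : Dat σ) : Perm β :=
  ⟨psiFun d, psiInv d, psi_left_inv d, psi_right_inv d⟩

lemma psi_apply (d : Dat σ) (x : β) : psi d x = psiFun d x := rfl

lemma psi_comm (d : Dat σ) : psi d * σ = σ * psi d := by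
  ext x
  simp only [Equiv.Perm.mul_apply]
  by_cases hx : σ x = x
  · rw [hx, psi_apply, psiFun_fix d hx]
    exact (ofSubtype_fix d.1 hx).symm
  · set c : CF σ := ⟨σ.cycleOf x, CF.mem_cf hx⟩ with hc
    have hxc : x ∈ c.1.support := CF.self_mem_support hx
    set m := idx c (pt c) x with hm
    have hrw : (c.1 ^ m) (pt c) = x := idx_spec (pt_mem c) hxc
    have hσx : σ x = (c.1 ^ (m + 1)) (pt c) := by
      rw [CF.apply_eq c hxc, ← hrw, pow_succ', Equiv.Perm.mul_apply]
    have h1 : psi d (σ x) = ((d.2.1.1 c).1 ^ (m + 1)) (bpt d.2.2 (d.2.1.1 c)) := by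
      rw [psi_apply, hσx, psiFun_pow]
    have h2 : psi d x = ((d.2.1.1 c).1 ^ m) (bpt d.2.2 (d.2.1.1 c)) := by
      rw [psi_apply, ← hrw, psiFun_pow]
    rw [h1, h2]
    have hmem : ((d.2.1.1 c).1 ^ m) (bpt d.2.2 (d.2.1.1 c)) ∈ (d.2.1.1 c).1.support :=
      pow_apply_mem_support.mpr (bpt_mem _ _)
    rw [CF.apply_eq (d.2.1.1 c) hmem, pow_succ', Equiv.Perm.mul_apply]


lemma psi_injective : Function.Injective (psi (σ := σ)) := by
  rintro ⟨ρ, π, r⟩ ⟨ρ', π', r'⟩ h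
  have happ : ∀ x : β, psiFun (⟨ρ, π, r⟩ : Dat σ) x = psiFun (⟨ρ', π', r'⟩ : Dat σ) x :=
    fun x => DFunLike.congr_fun h x
  have key : ∀ c : CF σ, bpt r (π.1 c) = bpt r' (π'.1 c) := by
    intro c
    have h0 := happ (pt c)
    have e1 := psiFun_pow (⟨ρ, π, r⟩ : Dat σ) c 0
    have e2 := psiFun_pow (⟨ρ', π', r'⟩ : Dat σ) c 0
    rw [pow_zero, pow_zero, Equiv.Perm.one_apply, Equiv.Perm.one_apply] at e1 e2
    rw [e1, e2] at h0
    exact h0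
  have hπ : π = π' := by
    apply Subtype.ext; apply Equiv.ext; intro c
    exact CF.eq_of_mem_support (bpt_mem r (π.1 c)) ((key c) ▸ bpt_mem r' (π'.1 c))
  subst hπ
  have hr : r = r' := by
    funext c
    have h0 := key (π.1⁻¹ c)
    rw [Perm.coe_inv, Equiv.apply_symm_apply] at h0
    exact Subtype.ext
      (zpowers_eq_of_apply_eq (CF.isCycle c) (r c).2 (r' c).2 (pt_mem c) h0)
  have hρ : ρ = ρ' := by
    apply Equiv.ext; intro x
    have h0 := happ x.1
    rw [psiFun_fix (⟨ρ, π, r⟩ : Dat σ) x.2, psiFun_fix (⟨ρ', π, r'⟩ : Dat σ) x.2,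
      ofSubtype_apply_of_mem ρ x.2, ofSubtype_apply_of_mem ρ' x.2] at h0
    exact Subtype.ext h0
  rw [hρ, hr]

lemma psi_surjective {τ : Perm β} (hτ : τ * σ = σ * τ) : ∃ d : Dat σ, psi d = τ := by
  have hcomm : ∀ x, τ (σ x) = σ (τ x) := fun x => by
    have h1 : (τ * σ) x = (σ * τ) x := by rw [hτ]
    simpa [Equiv.Perm.mul_apply] using h1
  have hfix : ∀ x, σ x = x ↔ σ (τ x) = τ x := fun x => by
    constructor
    · intro h; rw [← hcomm x, h]
    · intro h
      have h2 : τ (σ x) = τ x := by rw [hcomm x, h]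
      exact τ.injective h2
  set ρ : Perm {x : β // σ x = x} := τ.subtypePerm (fun x => (hfix x).symm) with hρ
  have hconj : τ * σ * τ⁻¹ = σ := by rw [hτ, mul_inv_cancel_right]
  have hconj' : τ⁻¹ * σ * (τ⁻¹)⁻¹ = σ := by
    rw [inv_inv, mul_assoc, ← hτ, ← mul_assoc, inv_mul_cancel, one_mul]
  have hmem1 : ∀ c : CF σ, τ * c.1 * τ⁻¹ ∈ σ.cycleFactorsFinset := by
    intro c
    have h := (mem_cycleFactorsFinset_conj σ τ c.1).mpr c.2
    rwa [hconj] at h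
  have hmem2 : ∀ c : CF σ, τ⁻¹ * c.1 * (τ⁻¹)⁻¹ ∈ σ.cycleFactorsFinset := by
    intro c
    have h := (mem_cycleFactorsFinset_conj σ τ⁻¹ c.1).mpr c.2
    rwa [hconj'] at h
  set π : Perm (CF σ) :=
    { toFun := fun c => ⟨τ * c.1 * τ⁻¹, hmem1 c⟩
      invFun := fun c => ⟨τ⁻¹ * c.1 * (τ⁻¹)⁻¹, hmem2 c⟩
      left_inv := fun c => Subtype.ext (by simp only []; group)
      right_inv := fun c => Subtype.ext (by simp only []; group) } with hπdef
  have hπcard : ∀ c : CF σ, (π c).1.support.card = c.1.support.card := fun c =>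
    card_support_conj
  have hmap : ∀ c : CF σ, τ (pt (π⁻¹ c)) ∈ c.1.support := by
    intro c
    have h1 : pt (π⁻¹ c) ∈ (π⁻¹ c).1.support := pt_mem _
    have h2 : τ (pt (π⁻¹ c)) ∈ (π (π⁻¹ c)).1.support := by
      show _ ∈ (τ * (π⁻¹ c).1 * τ⁻¹).support
      rw [support_conj]
      exact Finset.mem_map_of_mem _ h1
    rwa [Perm.coe_inv, Equiv.apply_symm_apply] at h2
  set r : (c : CF σ) → zpowers c.1 := fun c =>
    ⟨c.1 ^ idx c (pt c) (τ (pt (π⁻¹ c))), Subgroup.pow_mem _ (Subgroup.mem_zpowers c.1) _⟩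
    with hrdef
  have hbpt : ∀ c, bpt r c = τ (pt (π⁻¹ c)) := fun c => idx_spec (pt_mem c) (hmap c)
  refine ⟨⟨ρ, ⟨π, hπcard⟩, r⟩, ?_⟩
  apply Equiv.ext; intro x
  by_cases hx : σ x = x
  · rw [psi_apply (⟨ρ, ⟨π, hπcard⟩, r⟩ : Dat σ), psiFun_fix (⟨ρ, ⟨π, hπcard⟩, r⟩ : Dat σ) hx,
      ofSubtype_apply_of_mem ρ hx]
    rfl
  · set c : CF σ := ⟨σ.cycleOf x, CF.mem_cf hx⟩ with hc
    have hxc : x ∈ c.1.support := CF.self_mem_support hx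
    set m := idx c (pt c) x with hm
    have hrw : (c.1 ^ m) (pt c) = x := idx_spec (pt_mem c) hxc
    have h1 : psi (⟨ρ, ⟨π, hπcard⟩, r⟩ : Dat σ) x = ((π c).1 ^ m) (bpt r (π c)) := by
      rw [psi_apply (⟨ρ, ⟨π, hπcard⟩, r⟩ : Dat σ), ← hrw, psiFun_pow (⟨ρ, ⟨π, hπcard⟩, r⟩ : Dat σ)]
    rw [h1, hbpt (π c), Perm.coe_inv, Equiv.symm_apply_apply, ← hrw]
    show ((τ * c.1 * τ⁻¹) ^ m) (τ (pt c)) = τ ((c.1 ^ m) (pt c))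
    rw [conj_pow]
    simp [Equiv.Perm.mul_apply]

noncomputable def psiEquiv (σ : Perm β) : Dat σ ≃ {τ : Perm β // τ * σ = σ * τ} :=
  Equiv.ofBijective (fun d => ⟨psi d, psi_comm d⟩)
    ⟨fun d d' h => psi_injective (congrArg Subtype.val h),
     fun τ => (psi_surjective τ.2).imp fun _ hd => Subtype.ext hd⟩


lemma card_fixed_perm (σ : Perm β) :
    Nat.card (Perm {x : β // σ x = x}) =
      (Fintype.card β - σ.cycleType.sum).factorial := by
  rw [Nat.card_eq_fintype_card, Fintype.card_perm]
  congr 1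
  rw [← σ.card_fixedPoints]
  exact Fintype.card_congr (Equiv.subtypeEquivRight fun x => Iff.rfl)

lemma card_pi_zpowers (σ : Perm β) :
    Nat.card ((c : CF σ) → zpowers c.1) =
      ∏ i ∈ σ.cycleType.toFinset, i ^ σ.cycleType.count i := by
  rw [Nat.card_pi, ← Finset.prod_multiset_count]
  have h1 : ∀ c : CF σ, Nat.card (zpowers c.1) = c.1.support.card := fun c => by
    rw [Nat.card_zpowers, (CF.isCycle c).orderOf]
  rw [Finset.prod_congr rfl fun c _ => h1 c]
  rw [Finset.prod_coe_sort σ.cycleFactorsFinset (fun a => a.support.card),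
    Finset.prod_eq_multiset_prod]
  rfl

lemma image_len (σ : Perm β) :
    Finset.univ.image (fun c : CF σ => c.1.support.card) = σ.cycleType.toFinset := by
  ext i
  simp [cycleType_def, Function.comp, Subtype.exists, Finset.mem_image,
    Multiset.mem_toFinset, Multiset.mem_map]

lemma card_fiber (σ : Perm β) (i : ℕ) :
    Fintype.card {c : CF σ // c.1.support.card = i} = σ.cycleType.count i := by
  have e : {c : CF σ // c.1.support.card = i} ≃
      {a : Perm β // a ∈ σ.cycleFactorsFinset.filter (fun a => a.support.card = i)} :=
    { toFun := fun c => ⟨c.1.1, Finset.mem_filter.2 ⟨c.1.2, c.2⟩⟩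
      invFun := fun a => ⟨⟨a.1, (Finset.mem_filter.1 a.2).1⟩, (Finset.mem_filter.1 a.2).2⟩
      left_inv := fun c => rfl
      right_inv := fun a => rfl }
  rw [Fintype.card_congr e, Fintype.card_coe]
  rw [cycleType_def, Multiset.count_map]
  have h : Multiset.filter (fun a => i = (Finset.card ∘ support) a) σ.cycleFactorsFinset.val
      = Multiset.filter (fun a : Perm β => a.support.card = i) σ.cycleFactorsFinset.val := by
    apply Multiset.filter_congr
    intro x _
    exact eq_comm
  rw [h]
  rfl

lemma card_len_preserving (σ : Perm β) :
    Nat.card {π : Perm (CF σ) // ∀ c, (π c).1.support.card = c.1.support.card} =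
      ∏ i ∈ σ.cycleType.toFinset, (σ.cycleType.count i).factorial := by
  have e : {π : Perm (CF σ) // ∀ c, (π c).1.support.card = c.1.support.card} ≃
      {π : Perm (CF σ) // (fun c : CF σ => c.1.support.card) ∘ π
        = (fun c : CF σ => c.1.support.card)} :=
    Equiv.subtypeEquivRight fun π => by
      constructor
      · intro h; funext c; exact h c
      · intro h c; exact congrFun h c
  rw [Nat.card_congr e, Nat.card_eq_fintype_card,
    DomMulAct.stabilizer_card' (fun c : CF σ => c.1.support.card)]
  rw [image_len σ]
  exact Finset.prod_congr rfl fun i _ => by rw [card_fiber σ i]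

lemma card_dat (σ : Perm β) :
    Nat.card (Dat σ) = (Fintype.card β - σ.cycleType.sum).factorial *
      ∏ i ∈ σ.cycleType.toFinset,
        ((σ.cycleType.count i).factorial * i ^ σ.cycleType.count i) := by
  rw [Dat, Nat.card_prod, Nat.card_prod]
  rw [card_fixed_perm, card_len_preserving, card_pi_zpowers]
  rw [← Finset.prod_mul_distrib]

theorem card_centralizer (σ : Perm β) :
    Nat.card {τ : Perm β // τ * σ = σ * τ} =
      (Fintype.card β - σ.cycleType.sum).factorial *
        ∏ i ∈ σ.cycleType.toFinset,
          ((σ.cycleType.count i).factorial * i ^ σ.cycleType.count i) := by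
  rw [← Nat.card_congr (psiEquiv σ), card_dat]


end ConjCount

open ConjCount in
/-- The size of the conjugacy class of a permutation of cycle type
[1^{α₁} 2^{α₂} ⋯ n^{αₙ}] is n! / (∏ i, i^{αᵢ} · αᵢ!). -/
theorem conj_class_card (n : ℕ) (σ : Equiv.Perm (Fin n)) (α : ℕ → ℕ)
    (hα₁ : α 1 = n - σ.cycleType.sum)
    (hα : ∀ i, 2 ≤ i → α i = σ.cycleType.count i)
    (hpart : ∑ i ∈ Finset.Icc 1 n, i * α i = n) :
    Nat.card {τ : Equiv.Perm (Fin n) // IsConj σ τ}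
      = n.factorial / ∏ i ∈ Finset.Icc 1 n, (i ^ α i * (α i).factorial) := by
  classical
  set P := ∏ i ∈ Finset.Icc 1 n, (i ^ α i * (α i).factorial) with hPdef
  have hcent : Nat.card {τ : Equiv.Perm (Fin n) // τ * σ = σ * τ} = P := by
    rw [card_centralizer σ]
    rcases Nat.eq_zero_or_pos n with hn | hn
    · subst hn
      have hσ : σ = 1 := Subsingleton.elim σ 1
      subst hσ
      simp [hPdef, Equiv.Perm.cycleType_one]
    · have hIcc : Finset.Icc 1 n = insert 1 (Finset.Icc 2 n) := by
        ext i
        simp only [Finset.mem_Icc, Finset.mem_insert]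
        omega
      have h1notin : (1 : ℕ) ∉ Finset.Icc 2 n := by simp
      have hsub : σ.cycleType.toFinset ⊆ Finset.Icc 2 n := by
        intro i hi
        rw [Multiset.mem_toFinset] at hi
        rw [Finset.mem_Icc]
        refine ⟨Equiv.Perm.two_le_of_mem_cycleType hi, ?_⟩
        calc i ≤ σ.support.card := Equiv.Perm.le_card_support_of_mem_cycleType hi
        _ ≤ Fintype.card (Fin n) := Finset.card_le_univ _
        _ = n := Fintype.card_fin n
      have hzero : ∀ i ∈ Finset.Icc 2 n, i ∉ σ.cycleType.toFinset →
          i ^ α i * (α i).factorial = 1 := by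
        intro i hi hni
        have h2 : 2 ≤ i := (Finset.mem_Icc.1 hi).1
        have h0 : α i = 0 := by
          rw [hα i h2]
          exact Multiset.count_eq_zero.2 fun hmem => hni (Multiset.mem_toFinset.2 hmem)
        simp [h0]
      have hagree : ∀ i ∈ σ.cycleType.toFinset,
          (σ.cycleType.count i).factorial * i ^ σ.cycleType.count i
            = i ^ α i * (α i).factorial := by
        intro i hi
        rw [hα i (Equiv.Perm.two_le_of_mem_cycleType (Multiset.mem_toFinset.1 hi)), mul_comm]
      rw [hPdef, hIcc, Finset.prod_insert h1notin, one_pow]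
      rw [Finset.prod_congr rfl hagree, Finset.prod_subset hsub hzero]
      rw [Fintype.card_fin, ← hα₁, one_mul]
  have horb : Nat.card {τ : Equiv.Perm (Fin n) // IsConj σ τ} * P = n.factorial := by
    letI : Fintype (MulAction.orbit (ConjAct (Equiv.Perm (Fin n))) σ) := Fintype.ofFinite _
    letI : Fintype (MulAction.stabilizer (ConjAct (Equiv.Perm (Fin n))) σ) := Fintype.ofFinite _
    have hos := MulAction.card_orbit_mul_card_stabilizer_eq_card_group
      (ConjAct (Equiv.Perm (Fin n))) σ
    have h1 : Nat.card {τ : Equiv.Perm (Fin n) // IsConj σ τ}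
        = Nat.card (MulAction.orbit (ConjAct (Equiv.Perm (Fin n))) σ) :=
      Nat.card_congr (Equiv.subtypeEquivRight fun τ => by
        rw [ConjAct.mem_orbit_conjAct]
        exact isConj_comm)
    have h2 : Nat.card (MulAction.stabilizer (ConjAct (Equiv.Perm (Fin n))) σ)
        = Nat.card {τ : Equiv.Perm (Fin n) // τ * σ = σ * τ} :=
      Nat.card_congr (Equiv.subtypeEquiv ConjAct.ofConjAct.toEquiv fun g => by
        rw [MulAction.mem_stabilizer_iff, ConjAct.smul_def, mul_inv_eq_iff_eq_mul]
        rfl)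
    rw [h1, ← hcent, ← h2, Nat.card_eq_fintype_card, Nat.card_eq_fintype_card, hos]
    show Fintype.card (ConjAct (Equiv.Perm (Fin n))) = n.factorial
    rw [← Nat.card_eq_fintype_card, Nat.card_congr ConjAct.ofConjAct.toEquiv,
      Nat.card_eq_fintype_card, Fintype.card_perm, Fintype.card_fin]
  have hPpos : 0 < P := by
    rw [hPdef]
    apply Finset.prod_pos
    intro i hi
    have h1 : 1 ≤ i := (Finset.mem_Icc.1 hi).1
    exact mul_pos (pow_pos (by omega) _) (Nat.factorial_pos _)
  exact (Nat.div_eq_of_eq_mul_left hPpos horb.symm).symm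
end
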